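/- Let p ≥ 2 be an integer, θ > 0, R > 0, N ≥ 1, and let A_1, …, A_N ≥ 0 and L_0, …, L_{N−1} > 0 satisfy Σ_{k=1}^N A_k L_{k−1}^{(p+1)/(p−1)} ≤ 2 R^2 θ^{−2/(p−1)} and A_N ≥ (1/4)(Σ_{k=1}^N 1/sqrt(L_{k−1}))^2. Then A_N ≥ (1/4) · θ^{2/(p+1)} / (2R^2)^{(p−1)/(p+1)} · (Σ_{k=1}^N A_k^{(p−1)/(3p+1)})^{(3p+1)/(p+1)}. -/

import Mathlib

/-- Inequality (19) in the proof of Theorem 1: combining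
`∑_{k=1}^N A_k L_{k-1}^{(p+1)/(p-1)} ≤ 2R² θ^{-2/(p-1)}` with
`A_N ≥ (1/4)(∑_{k=1}^N 1/√(L_{k-1}))²` yields
`A_N ≥ (1/4) θ^{2/(p+1)} / (2R²)^{(p-1)/(p+1)} (∑_{k=1}^N A_k^{(p-1)/(3p+1)})^{(3p+1)/(p+1)}`. -/
theorem A_N_growth_estimate (p : ℕ) (hp : 2 ≤ p) (θ R : ℝ) (hθ : 0 < θ) (hR : 0 < R)
    (N : ℕ) (hN : 1 ≤ N) (A L : ℕ → ℝ)
    (hA : ∀ k ∈ Finset.Icc 1 N, 0 ≤ A k)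
    (hL : ∀ k ∈ Finset.Icc 1 N, 0 < L (k - 1))
    (h1 : ∑ k ∈ Finset.Icc 1 N, A k * L (k - 1) ^ (((p : ℝ) + 1) / ((p : ℝ) - 1))
      ≤ 2 * R ^ 2 * θ ^ (-(2 : ℝ) / ((p : ℝ) - 1)))
    (h2 : A N ≥ (1 / 4) * (∑ k ∈ Finset.Icc 1 N, 1 / Real.sqrt (L (k - 1))) ^ 2) :
    A N ≥ (1 / 4) * θ ^ ((2 : ℝ) / ((p : ℝ) + 1)) / (2 * R ^ 2) ^ (((p : ℝ) - 1) / ((p : ℝ) + 1))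
      * (∑ k ∈ Finset.Icc 1 N, A k ^ (((p : ℝ) - 1) / (3 * (p : ℝ) + 1)))
          ^ ((3 * (p : ℝ) + 1) / ((p : ℝ) + 1)) := by
  have hp2 : (2:ℝ) ≤ (p:ℝ) := by exact_mod_cast hp
  set pr : ℝ := (p : ℝ) with hprdef
  have hpm1 : (0:ℝ) < pr - 1 := by linarith
  have hpp1 : (0:ℝ) < pr + 1 := by linarith
  have h3p1 : (0:ℝ) < 3 * pr + 1 := by linarith
  set a : ℝ := (pr + 1) / (pr - 1) with ha
  set α : ℝ := (pr - 1) / (3 * pr + 1) with hα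
  set β : ℝ := (2 * (pr + 1)) / (3 * pr + 1) with hβ
  set γ : ℝ := (3 * pr + 1) / (pr + 1) with hγ
  set δ : ℝ := (pr - 1) / (pr + 1) with hδ
  have hαpos : 0 < α := div_pos hpm1 h3p1
  have hβpos : 0 < β := div_pos (by linarith) h3p1
  have hγpos : 0 < γ := div_pos h3p1 hpp1
  have hδpos : 0 < δ := div_pos hpm1 hpp1
  set s := Finset.Icc 1 N with hs
  set S1 : ℝ := ∑ k ∈ s, A k * L (k - 1) ^ a with hS1def
  set T : ℝ := ∑ k ∈ s, 1 / Real.sqrt (L (k - 1)) with hTdef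
  have hS1 : 0 ≤ S1 := Finset.sum_nonneg fun k hk =>
    mul_nonneg (hA k hk) (Real.rpow_nonneg (hL k hk).le a)
  have hT : 0 ≤ T := Finset.sum_nonneg fun k hk =>
    div_nonneg zero_le_one (Real.sqrt_nonneg _)
  -- Hölder's inequality
  have hfnn : ∀ k ∈ s, (0:ℝ) ≤ (A k * L (k - 1) ^ a) ^ α := fun k hk =>
    Real.rpow_nonneg (mul_nonneg (hA k hk) (Real.rpow_nonneg (hL k hk).le a)) α
  have hgnn : ∀ k ∈ s, (0:ℝ) ≤ (1 / Real.sqrt (L (k - 1))) ^ β := fun k hk =>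
    Real.rpow_nonneg (div_nonneg zero_le_one (Real.sqrt_nonneg _)) β
  have hPQ : Real.HolderConjugate (1/α) (1/β) := by
    rw [Real.holderConjugate_iff]
    constructor
    · rw [lt_div_iff₀ hαpos, one_mul, hα, div_lt_one h3p1]; linarith
    · simp only [one_div, inv_inv]
      rw [hα, hβ]
      field_simp
      ring
  have holder := Real.inner_le_Lp_mul_Lq_of_nonneg s hPQ hfnn hgnn
  have hab : a * α = β / 2 := by
    rw [ha, hα, hβ]; field_simp
  have e1 : ∀ k ∈ s, ((A k * L (k - 1) ^ a) ^ α) * ((1 / Real.sqrt (L (k - 1))) ^ β)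
      = A k ^ α := by
    intro k hk
    have hLk := hL k hk
    have hsq : 1 / Real.sqrt (L (k - 1)) = L (k - 1) ^ (-(1/2) : ℝ) := by
      rw [Real.rpow_neg hLk.le, one_div, Real.sqrt_eq_rpow]
    rw [hsq, Real.mul_rpow (hA k hk) (Real.rpow_nonneg hLk.le a),
      ← Real.rpow_mul hLk.le, ← Real.rpow_mul hLk.le, mul_assoc,
      ← Real.rpow_add hLk, hab,
      show β / 2 + -(1/2) * β = 0 by ring, Real.rpow_zero, mul_one]
  have e2 : ∀ k ∈ s, ((A k * L (k - 1) ^ a) ^ α) ^ (1/α : ℝ) = A k * L (k - 1) ^ a := by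
    intro k hk
    rw [← Real.rpow_mul (mul_nonneg (hA k hk) (Real.rpow_nonneg (hL k hk).le a)),
      mul_one_div_cancel hαpos.ne', Real.rpow_one]
  have e3 : ∀ k ∈ s, ((1 / Real.sqrt (L (k - 1))) ^ β) ^ (1/β : ℝ)
      = 1 / Real.sqrt (L (k - 1)) := by
    intro k hk
    rw [← Real.rpow_mul (div_nonneg zero_le_one (Real.sqrt_nonneg _)),
      mul_one_div_cancel hβpos.ne', Real.rpow_one]
  rw [Finset.sum_congr rfl e1, Finset.sum_congr rfl e2, Finset.sum_congr rfl e3,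
    one_div_one_div, one_div_one_div, ← hS1def, ← hTdef] at holder
  -- raise Hölder to the power γ
  have hSsum : (0:ℝ) ≤ ∑ k ∈ s, A k ^ α :=
    Finset.sum_nonneg fun k hk => Real.rpow_nonneg (hA k hk) α
  have hαγ : α * γ = δ := by rw [hα, hγ, hδ]; field_simp
  have hβγ : β * γ = 2 := by rw [hβ, hγ]; field_simp
  have H2 : (∑ k ∈ s, A k ^ α) ^ γ ≤ S1 ^ δ * T ^ 2 := by
    calc (∑ k ∈ s, A k ^ α) ^ γ ≤ (S1 ^ α * T ^ β) ^ γ :=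
          Real.rpow_le_rpow hSsum holder hγpos.le
      _ = S1 ^ δ * T ^ 2 := by
          rw [Real.mul_rpow (Real.rpow_nonneg hS1 α) (Real.rpow_nonneg hT β),
            ← Real.rpow_mul hS1, ← Real.rpow_mul hT, hαγ, hβγ]
          norm_num
  -- bound S1 ^ δ using h1
  have hedelta : (-2 / (pr - 1)) * δ = -2 / (pr + 1) := by
    rw [hδ]; field_simp
  have H3 : S1 ^ δ ≤ (2 * R ^ 2) ^ δ * θ ^ (-2 / (pr + 1) : ℝ) := by
    calc S1 ^ δ ≤ (2 * R ^ 2 * θ ^ (-2 / (pr - 1) : ℝ)) ^ δ :=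
          Real.rpow_le_rpow hS1 h1 hδpos.le
      _ = (2 * R ^ 2) ^ δ * θ ^ (-2 / (pr + 1) : ℝ) := by
          rw [Real.mul_rpow (by positivity) (Real.rpow_nonneg hθ.le _),
            ← Real.rpow_mul hθ.le, hedelta]
  -- assemble
  have hc : (0:ℝ) < 1 / 4 * θ ^ ((2:ℝ) / (pr + 1)) / (2 * R ^ 2) ^ δ := by positivity
  have hRδ : (0:ℝ) < (2 * R ^ 2) ^ δ := Real.rpow_pos_of_pos (by positivity) δ
  have hθθ : θ ^ ((2:ℝ) / (pr + 1)) * θ ^ (-2 / (pr + 1) : ℝ) = 1 := by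
    rw [← Real.rpow_add hθ, show (2:ℝ) / (pr + 1) + -2 / (pr + 1) = 0 by ring,
      Real.rpow_zero]
  calc (1 / 4 * θ ^ ((2:ℝ) / (pr + 1)) / (2 * R ^ 2) ^ δ) * (∑ k ∈ s, A k ^ α) ^ γ
      ≤ (1 / 4 * θ ^ ((2:ℝ) / (pr + 1)) / (2 * R ^ 2) ^ δ) * (S1 ^ δ * T ^ 2) := by
        exact mul_le_mul_of_nonneg_left H2 hc.le
    _ ≤ (1 / 4 * θ ^ ((2:ℝ) / (pr + 1)) / (2 * R ^ 2) ^ δ)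
          * ((2 * R ^ 2) ^ δ * θ ^ (-2 / (pr + 1) : ℝ) * T ^ 2) := by
        refine mul_le_mul_of_nonneg_left ?_ hc.le
        exact mul_le_mul_of_nonneg_right H3 (sq_nonneg T)
    _ = 1 / 4 * T ^ 2 := by
        field_simp
        linear_combination T ^ 2 * (by rw [← neg_div]; exact hθθ : θ ^ ((2:ℝ) / (pr + 1)) * θ ^ (-((2:ℝ) / (pr + 1))) = 1)
    _ ≤ A N := h2
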